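/- If a finite abelian group G admits a tight pair, then every saturated transfer system ℛ on G is realized: there exists U ∈ 𝒰_G with Tr(U) = ℛ. -/

import Mathlib

open scoped Classical

/-- The character group of `G`: monoid homomorphisms to `ℂˣ`. -/
abbrev CharGp (G : Type*) [Group G] := G →* ℂˣ

/-- Complex conjugation acting on characters: `χ ↦ χ̄`. -/
noncomputable def charConj {G : Type*} [Group G] (χ : CharGp G) : CharGp G :=
  (Units.map (starRingEnd ℂ).toMonoidHom).comp χ

/-- Restriction of characters along an inclusion of subgroups: `R_K^H` on elements. -/
def resChar {G : Type*} [Group G] {K H : Subgroup G} (h : K ≤ H) (χ : CharGp H) : CharGp K :=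
  χ.comp (Subgroup.inclusion h)

/-- Restriction of a character of `G` itself to a subgroup. -/
def resCharTop {G : Type*} [Group G] (K : Subgroup G) (χ : CharGp G) : CharGp K :=
  χ.comp K.subtype

/-- A transfer system on a finite group `G`: a partial order on subgroups refining
inclusion, closed under conjugation and under intersection-pullback. -/
structure TransferSystem (G : Type*) [Group G] where
  rel : Subgroup G → Subgroup G → Prop
  le_of_rel : ∀ {K H : Subgroup G}, rel K H → K ≤ H
  refl : ∀ H : Subgroup G, rel H H
  trans : ∀ {K L H : Subgroup G}, rel K L → rel L H → rel K H
  conj : ∀ {K H : Subgroup G} (g : G), rel K H →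
    rel (K.map (MulAut.conj g).toMonoidHom) (H.map (MulAut.conj g).toMonoidHom)
  inf_rel : ∀ {K H : Subgroup G} (L : Subgroup G), rel K H → L ≤ H → rel (K ⊓ L) L

/-- A transfer system is saturated if `(K,H) ∈ ℛ` and `K ≤ L ≤ H` imply `(L,H) ∈ ℛ`. -/
def TransferSystem.Saturated {G : Type*} [Group G] (R : TransferSystem G) : Prop :=
  ∀ ⦃K L H : Subgroup G⦄, R.rel K H → K ≤ L → L ≤ H → R.rel L H

/-- A subgroup `H` is `ℛ`-cofibrant if there is no proper `K < H` with `(K,H) ∈ ℛ`. -/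
def TransferSystem.Cofibrant {G : Type*} [Group G] (R : TransferSystem G)
    (H : Subgroup G) : Prop :=
  ¬ ∃ K : Subgroup G, K < H ∧ R.rel K H

/-- `𝒰_G`: subsets of `Ĝ` containing the trivial character and closed under conjugation. -/
def UnivSet (G : Type*) [Group G] : Set (Set (CharGp G)) :=
  {U | (1 : CharGp G) ∈ U ∧ ∀ χ ∈ U, charConj χ ∈ U}

/-- `Tr(U)`: the relation `{(K,H) : K ≤ H and I_K^H(R_K^G(U)) ⊆ R_H^G(U)}`. -/
def TrRel {G : Type*} [Group G] (U : Set (CharGp G)) (K H : Subgroup G) : Prop :=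
  ∃ h : K ≤ H, resChar h ⁻¹' (resCharTop K '' U) ⊆ resCharTop H '' U

/-- The sub-inductor axioms for a family `J_K^H : 𝒫(K̂) → 𝒫(Ĥ)`. -/
structure IsSubInductor {G : Type*} [CommGroup G]
    (J : ∀ K H : Subgroup G, K ≤ H → Set (CharGp K) → Set (CharGp H)) : Prop where
  conj_comm : ∀ {K H : Subgroup G} (h : K ≤ H) (U : Set (CharGp K)),
    J K H h (charConj '' U) = charConj '' J K H h U
  union_comm : ∀ {K H : Subgroup G} (h : K ≤ H) (s : Set (Set (CharGp K))),
    J K H h (⋃₀ s) = ⋃ U ∈ s, J K H h U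
  comp : ∀ {K L H : Subgroup G} (h1 : K ≤ L) (h2 : L ≤ H) (U : Set (CharGp K)),
    J L H h2 (J K L h1 U) = J K H (h1.trans h2) U
  res_cover : ∀ {K H : Subgroup G} (h : K ≤ H) (U : Set (CharGp K)),
    resChar h '' J K H h U = U
  res_le : ∀ {K L H : Subgroup G} (hK : K ≤ H) (hL : L ≤ H) (U : Set (CharGp L)),
    resChar hK '' J L H hL U ⊆
      J (K ⊓ L) K inf_le_left (resChar (inf_le_right : K ⊓ L ≤ L) '' U)
  one_mem : ∀ {K H : Subgroup G} (h : K ≤ H), (1 : CharGp H) ∈ J K H h {1}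

/-- The residue of a sub-inductor: `Res_J(H) = ⋃_{K < H} J_K^H(K̂)`. -/
def resJ {G : Type*} [CommGroup G]
    (J : ∀ K H : Subgroup G, K ≤ H → Set (CharGp K) → Set (CharGp H))
    (H : Subgroup G) : Set (CharGp H) :=
  ⋃ (K : Subgroup G) (h : K < H), J K H h.le Set.univ

/-- A diagram is `R`-stable if `R_K^H(D(H)) ⊆ D(K)` for all `K ≤ H`. -/
def RStable {G : Type*} [CommGroup G] (D : ∀ H : Subgroup G, Set (CharGp H)) : Prop :=
  ∀ {K H : Subgroup G} (h : K ≤ H), resChar h '' D H ⊆ D K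

/-- A tight pair: an `R`-stable conjugation-invariant diagram together with a
sub-inductor satisfying the two non-containment constraints. -/
structure IsTightPair {G : Type*} [CommGroup G]
    (D : ∀ H : Subgroup G, Set (CharGp H))
    (J : ∀ K H : Subgroup G, K ≤ H → Set (CharGp K) → Set (CharGp H)) : Prop where
  rstable : RStable D
  subind : IsSubInductor J
  conj_inv : ∀ H : Subgroup G, ∀ χ ∈ D H, charConj χ ∈ D H
  ind_not_le : ∀ {K H : Subgroup G} (h : K < H),
    ¬ (resChar h.le ⁻¹' D K ⊆ D H ∪ resJ J H)
  not_res : ∀ H : Subgroup G, ¬ (D H ⊆ resJ J H)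


section TightPairAux

set_option linter.unusedSectionVars false

variable {G : Type*} [CommGroup G] [Fintype G]

private lemma resChar_self {K : Subgroup G} (h : K ≤ K) (χ : CharGp K) : resChar h χ = χ :=
  MonoidHom.ext fun _ => rfl

private lemma resChar_resChar {K L H : Subgroup G} (h1 : K ≤ L) (h2 : L ≤ H) (χ : CharGp H) :
    resChar h1 (resChar h2 χ) = resChar (h1.trans h2) χ := MonoidHom.ext fun _ => rfl

private lemma resChar_conj {K H : Subgroup G} (h : K ≤ H) (χ : CharGp H) :
    resChar h (charConj χ) = charConj (resChar h χ) := MonoidHom.ext fun _ => rfl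

private instance : Finite (Subgroup G) :=
  Finite.of_injective (fun H => (H : Set G)) SetLike.coe_injective

private lemma card_lt_of_lt {K H : Subgroup G} (h : K < H) : Nat.card ↥K < Nat.card ↥H :=
  Set.Finite.card_lt_card (Set.toFinite (H : Set G)) (SetLike.coe_ssubset_coe.mpr h)

variable (R : TransferSystem G)

/-- The minimum subgroup `ℛ`-related to `H`. -/
private noncomputable def mS (H : Subgroup G) : Subgroup G :=
  WellFounded.min (wellFounded_lt) {K | R.rel K H} ⟨H, R.refl H⟩

private lemma mS_rel (H : Subgroup G) : R.rel (mS R H) H :=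
  WellFounded.min_mem (wellFounded_lt) {K | R.rel K H} ⟨H, R.refl H⟩

private lemma mS_le_of_rel {K H : Subgroup G} (hK : R.rel K H) : mS R H ≤ K := by
  have h1 : R.rel (mS R H ⊓ K) K := R.inf_rel K (mS_rel R H) (R.le_of_rel hK)
  have h2 : R.rel (mS R H ⊓ K) H := R.trans h1 hK
  have h3 := WellFounded.not_lt_min (wellFounded_lt) {K | R.rel K H} h2
  have h4 : mS R H ⊓ K = mS R H := ((inf_le_left).lt_or_eq).resolve_left h3
  rw [← h4]; exact inf_le_right

private lemma mS_le (H : Subgroup G) : mS R H ≤ H := R.le_of_rel (mS_rel R H)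

private lemma mS_mono {K H : Subgroup G} (h : K ≤ H) : mS R K ≤ mS R H :=
  le_trans (mS_le_of_rel R (R.inf_rel K (mS_rel R H) h)) inf_le_left

private lemma mS_idem (H : Subgroup G) : mS R (mS R H) = mS R H :=
  le_antisymm (mS_le _ _) (mS_le_of_rel R (R.trans (mS_rel R (mS R H)) (mS_rel R H)))

variable (D : ∀ H : Subgroup G, Set (CharGp H))
variable (Jf : ∀ K H : Subgroup G, K ≤ H → Set (CharGp K) → Set (CharGp H))

/-- The recursively-defined diagram realizing the saturated transfer system. -/
private noncomputable def Adiag (H : Subgroup G) : Set (CharGp H) :=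
  if hc : mS R H = H then
    D H ∪ ⋃ (K : Subgroup G) (h : K < H), Jf K H h.le (Adiag K)
  else
    resChar (mS_le R H) ⁻¹' Adiag (mS R H)
termination_by Nat.card ↥H
decreasing_by
  · exact card_lt_of_lt h
  · exact card_lt_of_lt ((mS_le R H).lt_of_ne hc)

private lemma Adiag_def (H : Subgroup G) : Adiag R D Jf H =
    if hc : mS R H = H then
      D H ∪ ⋃ (K : Subgroup G) (h : K < H), Jf K H h.le (Adiag R D Jf K)
    else
      resChar (mS_le R H) ⁻¹' Adiag R D Jf (mS R H) := by
  rw [Adiag]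

variable {Jf} in
private lemma Jf_mono (hsub : IsSubInductor Jf) {K H : Subgroup G} (h : K ≤ H)
    {U V : Set (CharGp K)} (hUV : U ⊆ V) : Jf K H h U ⊆ Jf K H h V := by
  have h2 := hsub.union_comm h {U, V}
  rw [Set.sUnion_pair, Set.biUnion_pair, Set.union_eq_self_of_subset_left hUV] at h2
  rw [h2]
  exact Set.subset_union_left

variable {Jf} in
private lemma Jf_self (hsub : IsSubInductor Jf) {K : Subgroup G} (h : K ≤ K)
    (U : Set (CharGp K)) : Jf K K h U = U := by
  have h1 := hsub.res_cover h U
  rwa [show resChar h = (id : CharGp K → CharGp K) from funext (resChar_self h),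
    Set.image_id] at h1

variable {Jf} in
private lemma exists_mem_J (hsub : IsSubInductor Jf) {K H : Subgroup G} (h : K ≤ H)
    (ψ : CharGp K) : ∃ χ ∈ Jf K H h {ψ}, resChar h χ = ψ := by
  have h1 : ψ ∈ resChar h '' Jf K H h {ψ} := by
    rw [hsub.res_cover h {ψ}]; exact rfl
  obtain ⟨χ, hχ, e⟩ := h1
  exact ⟨χ, hχ, e⟩

private lemma pre_of_eq {M K : Subgroup G} (e : M = K) (h : M ≤ K) :
    resChar h ⁻¹' Adiag R D Jf M ⊆ Adiag R D Jf K := by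
  subst e
  intro χ hχ
  rwa [Set.mem_preimage, resChar_self] at hχ

private lemma pre_mS (K : Subgroup G) :
    resChar (mS_le R K) ⁻¹' Adiag R D Jf (mS R K) ⊆ Adiag R D Jf K := by
  by_cases hc : mS R K = K
  · exact pre_of_eq R D Jf hc _
  · rw [Adiag_def R D Jf K, dif_neg hc]

variable {Jf D} in
private lemma master (hsub : IsSubInductor Jf) (hD : RStable D)
    (H : Subgroup G) :
    (D H ⊆ Adiag R D Jf H) ∧
    (∀ (K : Subgroup G) (h : K ≤ H), Jf K H h (Adiag R D Jf K) ⊆ Adiag R D Jf H) ∧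
    (∀ (K : Subgroup G) (h : K ≤ H), resChar h '' Adiag R D Jf H = Adiag R D Jf K) := by
  by_cases hc : mS R H = H
  · -- cofibrant case
    have hA : Adiag R D Jf H =
        D H ∪ ⋃ (K : Subgroup G) (h : K < H), Jf K H h.le (Adiag R D Jf K) := by
      rw [Adiag_def, dif_pos hc]
    have hC1 : ∀ (K : Subgroup G) (h : K ≤ H),
        Jf K H h (Adiag R D Jf K) ⊆ Adiag R D Jf H := by
      intro K h
      rcases h.lt_or_eq with hlt | he
      · rw [hA]
        intro χ hχ
        exact Set.mem_union_right _
          (Set.mem_iUnion.mpr ⟨K, Set.mem_iUnion.mpr ⟨hlt, hχ⟩⟩)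
      · subst he
        rw [Jf_self hsub]
    have hC0 : D H ⊆ Adiag R D Jf H := by
      rw [hA]; exact Set.subset_union_left
    refine ⟨hC0, hC1, ?_⟩
    intro K h
    rcases h.lt_or_eq with hlt | he
    · have hmK := master hsub hD K
      apply Set.Subset.antisymm
      · rw [hA]
        rintro _ ⟨χ, hχ, rfl⟩
        rcases hχ with hχ | hχ
        · exact hmK.1 (hD h (Set.mem_image_of_mem _ hχ))
        · rw [Set.mem_iUnion] at hχ
          obtain ⟨K', hχ⟩ := hχ
          rw [Set.mem_iUnion] at hχ
          obtain ⟨hK', hχ⟩ := hχ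
          have hK'm := master hsub hD K'
          have hmem := hsub.res_le h hK'.le (Adiag R D Jf K') (Set.mem_image_of_mem _ hχ)
          rw [hK'm.2.2 (K ⊓ K') inf_le_right] at hmem
          exact hmK.2.1 (K ⊓ K') inf_le_left hmem
      · intro ψ hψ
        have h1 : ψ ∈ resChar h '' Jf K H h (Adiag R D Jf K) := by
          rw [hsub.res_cover h _]; exact hψ
        obtain ⟨χ, hχ, e⟩ := h1
        exact ⟨χ, hC1 K h hχ, e⟩
    · subst he
      rw [show resChar h = (id : CharGp K → CharGp K) from funext (resChar_self h),
        Set.image_id]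
  · -- non-cofibrant case
    have hmlt : mS R H < H := (mS_le R H).lt_of_ne hc
    have hA : Adiag R D Jf H = resChar (mS_le R H) ⁻¹' Adiag R D Jf (mS R H) := by
      rw [Adiag_def, dif_neg hc]
    have hmH := master hsub hD (mS R H)
    have hC1 : ∀ (K : Subgroup G) (h : K ≤ H),
        Jf K H h (Adiag R D Jf K) ⊆ Adiag R D Jf H := by
      intro K h
      rcases h.lt_or_eq with hlt | he
      · have hKm := master hsub hD K
        rw [hA]
        intro χ hχ
        have hmem := hsub.res_le (mS_le R H) h (Adiag R D Jf K) (Set.mem_image_of_mem _ hχ)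
        rw [hKm.2.2 (mS R H ⊓ K) inf_le_right] at hmem
        exact hmH.2.1 (mS R H ⊓ K) inf_le_left hmem
      · subst he
        rw [Jf_self hsub]
    have hC0 : D H ⊆ Adiag R D Jf H := by
      rw [hA]
      intro χ hχ
      exact hmH.1 (hD (mS_le R H) (Set.mem_image_of_mem _ hχ))
    refine ⟨hC0, hC1, ?_⟩
    intro K h
    rcases h.lt_or_eq with hlt | he
    · have hKm := master hsub hD K
      apply Set.Subset.antisymm
      · rintro _ ⟨χ, hχ, rfl⟩
        rw [hA] at hχ
        have h1 : resChar (inf_le_right : K ⊓ mS R H ≤ mS R H) (resChar (mS_le R H) χ)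
            ∈ Adiag R D Jf (K ⊓ mS R H) := by
          rw [← hmH.2.2 (K ⊓ mS R H) inf_le_right]
          exact Set.mem_image_of_mem _ hχ
        have h2 : resChar (inf_le_left : K ⊓ mS R H ≤ K) (resChar h χ)
            ∈ Adiag R D Jf (K ⊓ mS R H) := by
          rw [resChar_resChar]
          rw [resChar_resChar] at h1
          exact h1
        have hNm := master hsub hD (K ⊓ mS R H)
        have hmk2 : mS R K ≤ K ⊓ mS R H := le_inf (mS_le R K) (mS_mono R h)
        have h3 : resChar hmk2 (resChar (inf_le_left : K ⊓ mS R H ≤ K) (resChar h χ))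
            ∈ Adiag R D Jf (mS R K) := by
          rw [← hNm.2.2 (mS R K) hmk2]
          exact Set.mem_image_of_mem _ h2
        rw [resChar_resChar] at h3
        exact pre_mS R D Jf K h3
      · intro ψ hψ
        obtain ⟨χ, hχJ, hres⟩ := exists_mem_J hsub h ψ
        refine ⟨χ, ?_, hres⟩
        rw [hA]
        have hmem := hsub.res_le (mS_le R H) h ({ψ} : Set (CharGp K))
          (Set.mem_image_of_mem _ hχJ)
        rw [Set.image_singleton] at hmem
        have h1 : resChar (inf_le_right : mS R H ⊓ K ≤ K) ψ
            ∈ Adiag R D Jf (mS R H ⊓ K) := by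
          rw [← hKm.2.2 (mS R H ⊓ K) inf_le_right]
          exact Set.mem_image_of_mem _ hψ
        have h2 := Jf_mono hsub (inf_le_left : mS R H ⊓ K ≤ mS R H)
          (Set.singleton_subset_iff.mpr h1) hmem
        exact hmH.2.1 (mS R H ⊓ K) inf_le_left h2
    · subst he
      rw [show resChar h = (id : CharGp K → CharGp K) from funext (resChar_self h),
        Set.image_id]
termination_by Nat.card ↥H
decreasing_by
  all_goals first
    | exact card_lt_of_lt hlt
    | exact card_lt_of_lt hK'
    | exact card_lt_of_lt ((mS_le R H).lt_of_ne hc)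
    | exact card_lt_of_lt (lt_of_le_of_lt inf_le_right ((mS_le R H).lt_of_ne hc))

variable {Jf D} in
private lemma A_conj (hsub : IsSubInductor Jf)
    (hDc : ∀ H : Subgroup G, ∀ χ ∈ D H, charConj χ ∈ D H)
    (H : Subgroup G) : ∀ χ ∈ Adiag R D Jf H, charConj χ ∈ Adiag R D Jf H := by
  by_cases hc : mS R H = H
  · intro χ hχ
    rw [Adiag_def, dif_pos hc] at hχ ⊢
    rcases hχ with hχ | hχ
    · exact Or.inl (hDc H χ hχ)
    · rw [Set.mem_iUnion] at hχ
      obtain ⟨K, hχ⟩ := hχ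
      rw [Set.mem_iUnion] at hχ
      obtain ⟨hK, hχ⟩ := hχ
      have h1 : charConj χ ∈ charConj '' Jf K H hK.le (Adiag R D Jf K) :=
        Set.mem_image_of_mem _ hχ
      rw [← hsub.conj_comm hK.le] at h1
      have h2 : charConj '' Adiag R D Jf K ⊆ Adiag R D Jf K := by
        rintro _ ⟨ψ, hψ, rfl⟩
        exact A_conj hsub hDc K ψ hψ
      refine Or.inr ?_
      rw [Set.mem_iUnion]
      exact ⟨K, Set.mem_iUnion.mpr ⟨hK, Jf_mono hsub hK.le h2 h1⟩⟩
  · intro χ hχ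
    rw [Adiag_def, dif_neg hc] at hχ ⊢
    rw [Set.mem_preimage, resChar_conj]
    exact A_conj hsub hDc (mS R H) _ hχ
termination_by Nat.card ↥H
decreasing_by
  all_goals first
    | exact card_lt_of_lt hK
    | exact card_lt_of_lt ((mS_le R H).lt_of_ne hc)

private lemma charGp_bot_eq (χ : CharGp (⊥ : Subgroup G)) : χ = 1 := by
  ext x
  have hx : x = 1 := Subtype.ext ((Subgroup.mem_bot).mp x.2)
  rw [hx, map_one, map_one]

variable {Jf D} in
private lemma A_one_bot (hne : (D (⊥ : Subgroup G)).Nonempty) :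
    (1 : CharGp (⊥ : Subgroup G)) ∈ Adiag R D Jf ⊥ := by
  have hc : mS R (⊥ : Subgroup G) = ⊥ := le_bot_iff.mp (mS_le R ⊥)
  rw [Adiag_def, dif_pos hc]
  obtain ⟨χ, hχ⟩ := hne
  exact Or.inl ((charGp_bot_eq χ) ▸ hχ)

variable {Jf D} in
private lemma A_one (hsub : IsSubInductor Jf) (hD : RStable D)
    (hne : (D (⊥ : Subgroup G)).Nonempty) (H : Subgroup G) :
    (1 : CharGp H) ∈ Adiag R D Jf H := by
  by_cases hb : H = ⊥
  · subst hb
    exact A_one_bot R hne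
  · have hbl : (⊥ : Subgroup G) ≤ H := bot_le
    have h1 : (1 : CharGp H) ∈ Jf ⊥ H hbl {1} := hsub.one_mem hbl
    have h2 : ({1} : Set (CharGp (⊥ : Subgroup G))) ⊆ Adiag R D Jf ⊥ :=
      Set.singleton_subset_iff.mpr (A_one_bot R hne)
    exact (master R hsub hD H).2.1 ⊥ hbl (Jf_mono hsub hbl h2 h1)

private lemma restop_eq (K : Subgroup G) (χ : CharGp (⊤ : Subgroup G)) :
    resCharTop K (χ.comp Subgroup.topEquiv.symm.toMonoidHom) = resChar le_top χ :=
  MonoidHom.ext fun _ => rfl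

end TightPairAux

/-- **Corollary.** If a finite abelian group `G` admits a tight pair, then every
saturated transfer system on `G` is realized by some `U ∈ 𝒰_G`. -/
theorem tight_pair_realization (G : Type*) [CommGroup G] [Fintype G]
    (D : ∀ H : Subgroup G, Set (CharGp H))
    (J : ∀ K H : Subgroup G, K ≤ H → Set (CharGp K) → Set (CharGp H))
    (hDJ : IsTightPair D J)
    (R : TransferSystem G) (hR : R.Saturated) :
    ∃ U ∈ UnivSet G, ∀ K H : Subgroup G, R.rel K H ↔ TrRel U K H := by
  have hsub : IsSubInductor J := hDJ.subind
  have hD : RStable D := hDJ.rstable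
  have hne : (D (⊥ : Subgroup G)).Nonempty := by
    obtain ⟨χ, hχ, -⟩ := Set.not_subset.mp (hDJ.not_res ⊥)
    exact ⟨χ, hχ⟩
  refine ⟨(fun χ : CharGp (⊤ : Subgroup G) =>
      χ.comp Subgroup.topEquiv.symm.toMonoidHom) '' Adiag R D J ⊤, ⟨?_, ?_⟩, ?_⟩
  · exact ⟨1, A_one R hsub hD hne ⊤, MonoidHom.ext fun _ => rfl⟩
  · rintro _ ⟨χ, hχ, rfl⟩
    exact ⟨charConj χ, A_conj R hsub hDJ.conj_inv ⊤ χ hχ, MonoidHom.ext fun _ => rfl⟩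
  · intro K H
    have bridge : ∀ (L : Subgroup G), resCharTop L ''
        ((fun χ : CharGp (⊤ : Subgroup G) =>
          χ.comp Subgroup.topEquiv.symm.toMonoidHom) '' Adiag R D J ⊤) = Adiag R D J L := by
      intro L
      rw [Set.image_image]
      have he : (fun χ : CharGp (⊤ : Subgroup G) =>
          resCharTop L (χ.comp Subgroup.topEquiv.symm.toMonoidHom)) =
          fun χ => resChar (le_top : L ≤ ⊤) χ := funext fun χ => restop_eq L χ
      rw [he]
      exact (master R hsub hD ⊤).2.2 L le_top
    constructor
    · intro hrel
      have h : K ≤ H := R.le_of_rel hrel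
      have hm : mS R H ≤ K := mS_le_of_rel R hrel
      refine ⟨h, ?_⟩
      intro χ hχ
      rw [Set.mem_preimage, bridge K] at hχ
      rw [bridge H]
      apply pre_mS R D J H
      have h1 : resChar hm (resChar h χ) ∈ Adiag R D J (mS R H) := by
        rw [← (master R hsub hD K).2.2 (mS R H) hm]
        exact Set.mem_image_of_mem _ hχ
      rw [resChar_resChar] at h1
      exact h1
    · rintro ⟨h, hss⟩
      suffices hmK : mS R H ≤ K by exact hR (mS_rel R H) hmK h
      by_contra hK
      have hlt : mS R K < mS R H :=
        (mS_mono R h).lt_of_ne (fun e2 => hK ((le_of_eq e2.symm).trans (mS_le R K)))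
      obtain ⟨σ, hσD, hσn⟩ := Set.not_subset.mp (hDJ.ind_not_le hlt)
      have hσA : σ ∉ Adiag R D J (mS R H) := by
        rw [Adiag_def, dif_pos (mS_idem R H)]
        rintro (hs | hs)
        · exact hσn (Or.inl hs)
        · rw [Set.mem_iUnion] at hs
          obtain ⟨K', hs⟩ := hs
          rw [Set.mem_iUnion] at hs
          obtain ⟨hK', hs⟩ := hs
          refine hσn (Or.inr ?_)
          exact Set.mem_iUnion.mpr ⟨K', Set.mem_iUnion.mpr
            ⟨hK', Jf_mono hsub hK'.le (Set.subset_univ _) hs⟩⟩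
      obtain ⟨χ, hχJ, hχres⟩ := exists_mem_J hsub (mS_le R H) σ
      have hχK : resChar h χ ∈ Adiag R D J K := by
        apply pre_mS R D J K
        have e3 : resChar (mS_le R K) (resChar h χ) = resChar hlt.le σ := by
          rw [resChar_resChar, ← hχres, resChar_resChar]
        rw [Set.mem_preimage, e3]
        exact (master R hsub hD (mS R K)).1 hσD
      have hχH : χ ∉ Adiag R D J H := by
        intro hmem
        have h1 : resChar (mS_le R H) χ ∈ resChar (mS_le R H) '' Adiag R D J H :=
          Set.mem_image_of_mem _ hmem
        rw [(master R hsub hD H).2.2 (mS R H) (mS_le R H), hχres] at h1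
        exact hσA h1
      apply hχH
      have h2 := hss (show resChar h χ ∈ resCharTop K '' _ by
        rw [bridge K]; exact hχK)
      rwa [bridge H] at h2
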